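/- The braid b⁹ = σ_3^{−3} σ_1^{−3} σ_2^{−1} σ_3 σ_2^{−2} σ_1^{−2} σ_2^{−1} σ_3^{−1} σ_2 σ_1^{−2} σ_2^{−1} σ_3^{2} σ_2 σ_1 Δ_4^2 in the braid group B_4 is not quasipositive. -/

import Mathlib

open FreeGroup in
/-- The braid relations on `n` generators. -/
def braidRels (n : ℕ) : Set (FreeGroup (Fin n)) :=
  {r | (∃ i j : Fin n, (i : ℕ) + 1 = (j : ℕ) ∧
          r = of i * of j * of i * (of j * of i * of j)⁻¹) ∨
       (∃ i j : Fin n, (i : ℕ) + 2 ≤ (j : ℕ) ∧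
          r = of i * of j * (of j * of i)⁻¹)}

/-- The braid group `B_{n+1}`, presented with `n` generators `σ_1, …, σ_n`
(so `Braid (m - 1)` is the braid group on `m` strands). -/
def Braid (n : ℕ) : Type := PresentedGroup (braidRels n)

instance (n : ℕ) : Group (Braid n) :=
  inferInstanceAs (Group (PresentedGroup (braidRels n)))

/-- The Artin generator `σ_{i+1}` of the braid group (indices start at `0`,
so `σ 0` is the generator usually written `σ_1`). -/
def σ {n : ℕ} (i : Fin n) : Braid n := PresentedGroup.of i

/-- A braid is quasipositive if it can be written as a (possibly empty) product
of conjugates `w σ_1 w⁻¹` of the first Artin generator. -/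
def Quasipositive {n : ℕ} [NeZero n] (b : Braid n) : Prop :=
  ∃ l : List (Braid n), b = (l.map fun w => w * σ 0 * w⁻¹).prod


/-- `σ_1` in the braid group `B_4`. -/
def σ₁ : Braid 3 := σ 0
/-- `σ_2` in the braid group `B_4`. -/
def σ₂ : Braid 3 := σ 1
/-- `σ_3` in the braid group `B_4`. -/
def σ₃ : Braid 3 := σ 2
/-- The Garside element `Δ_4 = σ_1 σ_2 σ_3 σ_1 σ_2 σ_1` of `B_4`. -/
def Δ₄ : Braid 3 := σ₁ * σ₂ * σ₃ * σ₁ * σ₂ * σ₁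


set_option maxRecDepth 10000
set_option maxHeartbeats 2000000

namespace B9Aux

def S1u : Equiv.Perm (Fin 31) := ⟨![0,11,12,13,14,15,6,8,10,7,9,26,30,29,28,27,1,4,2,5,3,21,22,23,24,25,16,19,17,20,18], ![0,16,18,20,17,19,6,9,7,10,8,1,2,3,4,5,26,28,30,27,29,21,22,23,24,25,11,15,14,13,12], by decide, by decide⟩

def S2u : Equiv.Perm (Fin 31) := ⟨![2,1,5,0,4,3,16,22,28,9,15,6,12,18,24,30,21,27,8,14,20,11,17,23,29,10,26,7,13,19,25], ![3,1,0,5,4,2,11,27,18,9,25,21,12,28,19,10,6,22,13,29,20,16,7,23,14,30,26,17,8,24,15], by decide, by decide⟩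

def S3u : Equiv.Perm (Fin 31) := ⟨![0,3,1,4,2,5,6,9,7,10,8,13,11,14,12,15,20,18,16,19,17,22,25,23,21,24,29,27,30,28,26], ![0,2,4,1,3,5,6,8,10,7,9,12,14,11,13,15,18,20,17,19,16,24,21,23,25,22,30,27,29,26,28], by decide, by decide⟩

def Cm : List (Equiv.Perm (Fin 31)) := [⟨![0,2,4,1,3,5,27,28,29,30,26,20,16,17,18,19,8,9,10,6,7,21,22,23,24,25,14,15,11,12,13], ![0,3,1,4,2,5,19,20,16,17,18,28,29,30,26,27,12,13,14,15,11,21,22,23,24,25,10,6,7,8,9], by decide, by decide⟩, ⟨![0,3,1,4,2,5,6,9,7,10,8,13,11,14,12,15,20,18,16,19,17,22,25,23,21,24,29,27,30,28,26], ![0,2,4,1,3,5,6,8,10,7,9,12,14,11,13,15,18,20,17,19,16,24,21,23,25,22,30,27,29,26,28], by decide, by decide⟩, ⟨![0,10,9,8,7,6,19,18,17,16,20,12,14,11,13,15,28,26,29,27,30,21,22,23,24,25,3,5,2,4,1], ![0,30,28,26,29,27,5,4,3,2,1,13,11,14,12,15,9,8,7,6,10,21,22,23,24,25,17,19,16,18,20],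 by decide, by decide⟩, ⟨![0,11,12,13,14,15,6,8,10,7,9,26,30,29,28,27,1,4,2,5,3,21,22,23,24,25,16,19,17,20,18], ![0,16,18,20,17,19,6,9,7,10,8,1,2,3,4,5,26,28,30,27,29,21,22,23,24,25,11,15,14,13,12], by decide, by decide⟩, ⟨![0,17,20,18,16,19,5,1,2,3,4,9,7,10,8,6,13,12,11,15,14,21,22,23,24,25,30,27,29,26,28], ![0,7,8,9,10,6,15,12,14,11,13,18,17,16,20,19,4,1,3,5,2,21,22,23,24,25,29,27,30,28,26], by decide, by decide⟩, ⟨![0,29,26,28,30,27,15,13,11,14,12,4,3,2,1,5,18,20,17,19,16,21,22,23,24,25,7,6,10,9,8], ![0,14,13,12,11,15,27,26,30,29,28,8,10,7,9,6,20,18,16,19,17,21,22,23,24,25,2,5,3,1,4], by decide, by decide⟩, ⟨![1,5,2,3,0,4,20,30,15,25,10,11,21,6,16,26,7,17,27,12,22,28,13,23,8,18,24,9,19,29,14], ![4,0,2,3,5,1,13,16,24,27,10,11,19,22,30,8,14,17,25,28,6,12,20,23,26,9,15,18,21,29,7], by decide, by decide⟩, ⟨![2,1,5,0,4,3,16,22,28,9,15,6,12,18,24,30,21,27,8,14,20,11,17,23,29,10,26,7,13,19,25],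 ![3,1,0,5,4,2,11,27,18,9,25,21,12,28,19,10,6,22,13,29,20,16,7,23,14,30,26,17,8,24,15], by decide, by decide⟩, ⟨![3,1,0,5,4,2,17,15,8,26,24,22,20,13,6,29,27,25,18,11,9,7,30,23,16,14,12,10,28,21,19], ![2,1,5,0,4,3,14,21,8,20,27,19,26,13,25,7,24,6,18,30,12,29,11,23,10,17,9,16,28,15,22], by decide, by decide⟩, ⟨![4,0,2,3,5,1,18,7,21,15,29,17,6,25,14,28,16,10,24,13,27,20,9,23,12,26,19,8,22,11,30], ![1,5,2,3,0,4,12,7,27,22,17,29,24,19,14,9,16,11,6,26,21,8,28,23,18,13,25,20,15,10,30], by decide, by decide⟩, ⟨![7,1,22,27,12,17,10,6,8,9,0,25,26,13,19,2,15,21,18,29,4,30,16,23,14,3,20,11,28,24,5], ![10,1,15,25,20,30,7,0,8,9,6,27,4,13,24,16,22,5,18,14,26,17,2,23,29,11,12,3,28,19,21], by decide, by decide⟩, ⟨![8,27,2,14,21,20,9,7,6,0,10,11,22,19,30,4,3,17,15,26,24,18,1,23,28,13,25,12,5,29,16], ![9,22,2,16,15,28,8,7,0,6,10,11,27,25,3,18,30,17,21,13,5,4,12,23,20,26,19,1,24,29,14],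 by decide, by decide⟩, ⟨![9,25,11,3,27,18,8,7,0,6,10,29,19,24,14,1,16,2,22,28,15,12,26,23,4,20,5,13,21,17,30], ![8,15,17,3,24,26,9,7,6,0,10,2,21,27,14,20,16,29,5,12,25,28,18,23,13,1,22,4,19,11,30], by decide, by decide⟩, ⟨![10,13,27,24,4,16,7,0,8,9,6,19,12,28,21,3,25,15,1,30,20,2,11,23,17,29,26,14,18,5,22], ![7,18,21,15,4,29,10,6,8,9,0,22,12,1,27,17,5,24,28,11,20,14,30,23,3,16,26,2,13,25,19], by decide, by decide⟩, ⟨![11,8,19,22,4,30,3,25,18,9,27,15,12,13,0,14,24,5,28,7,20,17,29,23,10,2,26,16,1,6,21], ![14,28,25,6,4,17,29,19,1,9,24,0,12,13,15,11,27,21,8,2,20,30,3,23,16,7,26,10,18,22,5], by decide, by decide⟩, ⟨![12,21,10,3,19,28,1,7,22,27,17,11,15,0,14,13,16,29,25,8,5,26,4,23,20,9,6,18,24,2,30], ![13,6,29,3,22,20,26,7,19,25,2,11,0,15,14,12,16,10,27,4,24,1,8,23,28,18,21,9,5,17,30], by decide, by decide⟩, ⟨![13,19,2,7,25,26,4,16,27,24,10,11,0,15,14,12,30,17,5,9,21,8,18,23,1,28,22,20,6,29,3],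 ![12,24,2,30,6,18,28,3,21,19,10,11,15,0,14,13,7,17,22,1,27,20,26,23,9,4,5,8,25,29,16], by decide, by decide⟩, ⟨![14,1,24,19,9,29,2,27,8,20,21,0,12,13,15,11,5,22,18,10,26,3,7,23,30,16,4,17,28,25,6], ![11,1,6,21,26,16,30,22,8,4,19,15,12,13,0,14,25,27,18,3,9,10,17,23,2,29,20,7,28,5,24], by decide, by decide⟩, ⟨![16,1,21,6,26,11,29,5,8,12,25,24,4,13,27,10,19,0,18,17,20,14,3,23,7,30,9,2,28,22,15], ![17,1,27,22,12,7,3,24,8,26,15,5,9,13,21,30,0,19,18,16,20,2,29,23,11,10,4,14,28,6,25], by decide, by decide⟩, ⟨![17,28,6,25,4,14,30,21,13,9,5,27,12,1,22,7,0,19,18,16,20,29,10,23,2,11,26,3,8,15,24], ![16,13,24,27,4,10,2,15,28,9,22,25,12,8,5,29,19,0,18,17,20,7,14,23,30,3,26,11,1,21,6], by decide, by decide⟩, ⟨![18,6,2,30,24,12,26,14,5,22,10,11,25,27,3,9,16,17,19,20,0,1,28,23,13,8,21,4,15,29,7], ![20,21,2,14,27,8,1,30,25,15,10,11,5,24,7,28,16,17,0,18,19,26,9,23,4,12,6,13,22,29,3],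 by decide, by decide⟩, ⟨![20,22,29,3,6,13,28,7,24,5,11,2,27,21,14,8,16,17,0,18,19,9,12,23,26,4,15,1,25,10,30], ![18,27,11,3,25,9,4,7,15,21,29,10,22,5,14,26,16,17,19,20,0,13,1,23,8,28,24,12,6,2,30], by decide, by decide⟩, ⟨![21,30,13,9,17,5,6,26,16,11,1,18,29,7,4,15,12,28,3,19,10,24,0,23,22,25,2,27,14,8,20], ![22,10,26,18,14,5,6,13,29,3,20,9,16,2,28,15,8,4,11,19,30,0,24,23,21,25,7,27,17,12,1], by decide, by decide⟩, ⟨![22,14,18,26,10,5,6,20,3,29,13,28,2,16,9,15,4,8,30,19,11,25,21,23,24,0,17,27,7,1,12], ![25,29,12,8,16,5,6,28,17,14,4,20,30,10,1,15,13,26,2,19,7,22,0,23,24,21,3,27,11,9,18], by decide, by decide⟩, ⟨![24,7,28,20,11,5,6,12,30,2,18,8,17,3,26,15,9,1,14,19,29,0,22,23,25,21,10,27,16,13,4], ![21,17,9,13,30,5,6,1,11,16,26,4,7,29,18,15,28,12,10,19,3,25,22,23,0,24,14,27,2,20,8], by decide, by decide⟩, ⟨![25,16,8,12,29,5,6,4,14,17,28,1,10,30,20,15,26,13,7,19,2,21,24,23,0,22,11,27,3,18,9],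 ![24,11,20,28,7,5,6,18,2,30,12,26,3,17,8,15,1,9,29,19,14,21,25,23,22,0,16,27,10,4,13], by decide, by decide⟩, ⟨![26,24,17,3,15,8,13,7,25,19,2,10,5,22,14,18,16,11,21,1,6,4,20,23,9,12,27,28,0,29,30], ![28,19,10,3,21,12,20,7,5,24,11,17,25,6,14,4,16,2,15,9,22,18,13,23,1,8,0,26,27,29,30], by decide, by decide⟩, ⟨![28,15,2,16,22,9,12,3,19,21,10,11,24,5,7,20,14,17,6,4,25,13,8,23,18,1,0,26,27,29,30], ![26,25,2,7,19,13,18,14,22,5,10,11,6,21,16,1,3,17,24,8,15,9,4,23,12,20,27,28,0,29,30], by decide, by decide⟩, ⟨![29,18,15,21,4,7,14,24,1,9,19,5,12,8,25,16,22,6,13,3,20,10,2,23,11,17,26,30,28,27,0], ![30,8,22,19,4,11,17,5,13,9,21,24,12,18,6,2,15,25,1,10,20,3,16,23,7,14,26,29,28,0,27], by decide, by decide⟩, ⟨![30,1,25,15,20,10,11,19,8,4,22,21,9,13,5,17,6,24,18,2,12,16,14,23,3,7,26,29,28,0,27], ![29,1,19,24,9,14,16,25,8,12,5,6,20,13,22,3,21,15,18,7,4,11,10,23,17,2,26,30,28,27,0],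 by decide, by decide⟩]

def P1 : Equiv.Perm (Fin 31) := ⟨![0,3,1,4,2,5,6,9,7,10,8,13,11,14,12,15,20,18,16,19,17,22,25,23,21,24,29,27,30,28,26], ![0,2,4,1,3,5,6,8,10,7,9,12,14,11,13,15,18,20,17,19,16,24,21,23,25,22,30,27,29,26,28], by decide, by decide⟩

def P2 : Equiv.Perm (Fin 31) := ⟨![0,13,11,14,12,15,6,7,8,9,10,29,26,28,30,27,3,2,1,5,4,22,25,23,21,24,20,19,18,17,16], ![0,18,17,16,20,19,6,7,8,9,10,2,4,1,3,5,30,29,28,27,26,24,21,23,25,22,12,15,13,11,14], by decide, by decide⟩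

def P3 : Equiv.Perm (Fin 31) := ⟨![14,13,0,15,12,11,29,19,1,9,24,22,26,18,5,10,6,25,28,17,4,3,7,23,30,16,20,2,8,21,27], ![2,8,27,21,20,14,16,22,28,9,15,5,4,1,0,3,25,19,13,7,26,29,11,23,10,17,12,30,18,6,24], by decide, by decide⟩

def P4 : Equiv.Perm (Fin 31) := ⟨![14,15,13,12,0,11,29,9,19,24,1,18,22,5,26,10,4,28,6,17,25,7,16,23,3,30,21,2,27,8,20], ![4,10,27,24,16,13,18,21,29,7,15,5,3,2,0,1,22,19,11,8,30,26,12,23,9,20,14,28,17,6,25], by decide, by decide⟩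

def P5 : Equiv.Perm (Fin 31) := ⟨![11,15,12,13,0,14,7,28,5,24,20,4,22,19,8,30,18,9,27,3,25,29,2,23,17,10,21,16,6,26,1], ![4,30,22,19,11,8,28,6,14,17,25,0,2,3,5,1,27,24,16,13,10,26,12,23,9,20,29,18,7,21,15], by decide, by decide⟩

def P6 : Equiv.Perm (Fin 31) := ⟨![11,21,1,26,6,16,7,20,24,5,28,18,27,25,9,3,4,8,22,30,19,29,2,23,17,10,15,14,0,13,12], ![28,2,22,15,16,9,4,6,17,14,25,0,30,29,27,26,5,24,11,20,7,1,18,23,8,13,3,12,10,21,19], by decide, by decide⟩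

def P7 : Equiv.Perm (Fin 31) := ⟨![26,21,11,16,6,1,18,14,22,5,10,29,27,0,30,28,7,2,25,13,19,4,20,23,9,12,15,8,24,17,3], ![13,5,17,30,21,9,4,16,27,24,10,2,25,19,7,26,3,29,6,20,22,1,8,23,28,18,0,12,15,11,14], by decide, by decide⟩

def P8 : Equiv.Perm (Fin 31) := ⟨![26,11,6,21,16,1,18,22,10,14,5,27,30,29,0,28,25,19,2,13,7,9,4,23,12,20,3,8,17,15,24], ![14,5,18,26,22,10,2,20,27,21,8,1,24,19,9,29,4,28,6,17,25,3,7,23,30,16,0,11,15,13,12], by decide, by decide⟩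

def P9 : Equiv.Perm (Fin 31) := ⟨![6,11,1,26,16,21,25,4,17,14,28,18,30,2,12,24,9,8,10,0,7,27,19,23,15,5,3,22,29,13,20], ![19,2,13,26,7,25,0,20,17,16,18,1,14,29,9,24,4,8,11,22,30,5,27,23,15,6,3,21,10,28,12], by decide, by decide⟩

def P10 : Equiv.Perm (Fin 31) := ⟨![6,3,20,13,29,22,25,28,14,17,4,9,10,7,8,0,18,12,30,24,2,27,19,23,15,5,11,21,16,26,1], ![15,30,20,1,10,25,0,13,14,11,12,26,17,3,8,24,28,9,16,22,2,27,5,23,19,6,29,21,7,4,18], by decide, by decide⟩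

def P11 : Equiv.Perm (Fin 31) := ⟨![13,3,6,22,29,20,9,21,30,17,5,27,10,16,24,4,25,19,7,26,2,18,28,23,8,1,11,12,14,15,0], ![30,25,20,1,15,10,2,18,24,6,12,26,27,0,28,29,13,9,21,17,5,7,3,23,14,16,19,11,22,4,8], by decide, by decide⟩

def P12 : Equiv.Perm (Fin 31) := ⟨![13,29,22,6,3,20,9,5,17,30,21,24,16,10,27,4,19,25,2,26,7,1,8,23,28,18,14,12,11,0,15], ![29,21,18,4,15,7,3,20,22,6,13,28,27,0,26,30,12,8,25,16,5,10,2,23,11,17,19,14,24,1,9], by decide, by decide⟩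

def P13 : Equiv.Perm (Fin 31) := ⟨![22,29,20,13,3,6,19,8,11,30,4,9,16,2,28,15,1,12,17,27,7,24,25,23,0,21,14,5,10,26,18], ![24,16,13,4,10,27,5,20,7,11,28,8,17,3,26,15,12,18,30,6,2,25,0,23,21,22,29,19,14,1,9], by decide, by decide⟩

def P14 : Equiv.Perm (Fin 31) := ⟨![22,9,16,2,28,15,19,11,4,8,30,14,18,26,10,5,29,3,20,6,13,24,25,23,0,21,1,27,12,7,17], ![24,26,3,17,8,15,19,29,9,1,14,7,28,20,11,5,2,30,12,6,18,25,0,23,21,22,13,27,4,16,10], by decide, by decide⟩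

def P15 : Equiv.Perm (Fin 31) := ⟨![22,9,16,2,28,15,19,11,4,8,30,14,18,26,10,5,29,3,20,6,13,24,25,23,0,21,1,27,12,7,17], ![24,26,3,17,8,15,19,29,9,1,14,7,28,20,11,5,2,30,12,6,18,25,0,23,21,22,13,27,4,16,10], by decide, by decide⟩

def fgen : Fin 3 → Equiv.Perm (Fin 31)
  | 0 => S1u
  | 1 => S2u
  | 2 => S3u

@[simp] lemma fgen0 : fgen 0 = S1u := rfl
@[simp] lemma fgen1 : fgen 1 = S2u := rfl
@[simp] lemma fgen2 : fgen 2 = S3u := rfl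

lemma hrels : ∀ r ∈ braidRels 3, (FreeGroup.lift fgen) r = 1 := by
  intro r hr
  rcases hr with ⟨i, j, hij, rfl⟩ | ⟨i, j, hij, rfl⟩ <;>
    fin_cases i <;> fin_cases j <;>
      first
        | exact absurd hij (by decide)
        | (simp only [map_mul, map_inv, FreeGroup.lift_apply_of, fgen0, fgen1, fgen2]; decide)

def φ : Braid 3 →* Equiv.Perm (Fin 31) := PresentedGroup.toGroup hrels

lemma φσ (i : Fin 3) : φ (σ i) = fgen i := PresentedGroup.toGroup.of hrels

lemma conj_mem : ∀ u : Braid 3, ∀ c : Equiv.Perm (Fin 31), c ∈ Cm → φ u * c * (φ u)⁻¹ ∈ Cm := by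
  have hs1b : (Cm.all fun m => decide (S1u * m * S1u⁻¹ ∈ Cm)) = true := by decide
  have hs1 : ∀ m ∈ Cm, S1u * m * S1u⁻¹ ∈ Cm := fun m hm =>
    of_decide_eq_true (List.all_eq_true.mp hs1b m hm)
  have hs2b : (Cm.all fun m => decide (S2u * m * S2u⁻¹ ∈ Cm)) = true := by decide
  have hs2 : ∀ m ∈ Cm, S2u * m * S2u⁻¹ ∈ Cm := fun m hm =>
    of_decide_eq_true (List.all_eq_true.mp hs2b m hm)
  have hs3b : (Cm.all fun m => decide (S3u * m * S3u⁻¹ ∈ Cm)) = true := by decide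
  have hs3 : ∀ m ∈ Cm, S3u * m * S3u⁻¹ ∈ Cm := fun m hm =>
    of_decide_eq_true (List.all_eq_true.mp hs3b m hm)
  have hs1'b : (Cm.all fun m => decide (S1u⁻¹ * m * S1u ∈ Cm)) = true := by decide
  have hs1' : ∀ m ∈ Cm, S1u⁻¹ * m * S1u ∈ Cm := fun m hm =>
    of_decide_eq_true (List.all_eq_true.mp hs1'b m hm)
  have hs2'b : (Cm.all fun m => decide (S2u⁻¹ * m * S2u ∈ Cm)) = true := by decide
  have hs2' : ∀ m ∈ Cm, S2u⁻¹ * m * S2u ∈ Cm := fun m hm =>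
    of_decide_eq_true (List.all_eq_true.mp hs2'b m hm)
  have hs3'b : (Cm.all fun m => decide (S3u⁻¹ * m * S3u ∈ Cm)) = true := by decide
  have hs3' : ∀ m ∈ Cm, S3u⁻¹ * m * S3u ∈ Cm := fun m hm =>
    of_decide_eq_true (List.all_eq_true.mp hs3'b m hm)
  intro u
  refine PresentedGroup.induction_on (C := fun b => ∀ c ∈ Cm, φ b * c * (φ b)⁻¹ ∈ Cm) u ?_
  intro z
  have hφz : φ (PresentedGroup.mk (braidRels 3) z) = FreeGroup.lift fgen z := rfl
  rw [hφz]
  clear hφz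
  induction z using FreeGroup.induction_on with
  | C1 => intro c hc; simpa using hc
  | of x =>
      intro c hc
      rw [FreeGroup.lift_apply_of]
      fin_cases x
      · exact hs1 c hc
      · exact hs2 c hc
      · exact hs3 c hc
  | inv_of x _ =>
      intro c hc
      rw [map_inv, FreeGroup.lift_apply_of, inv_inv]
      fin_cases x
      · exact hs1' c hc
      · exact hs2' c hc
      · exact hs3' c hc
  | mul x y ihx ihy =>
      intro c hc
      rw [map_mul]
      have key : (FreeGroup.lift fgen x * FreeGroup.lift fgen y) * c *
          ((FreeGroup.lift fgen x * FreeGroup.lift fgen y))⁻¹ =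
          FreeGroup.lift fgen x * (FreeGroup.lift fgen y * c * (FreeGroup.lift fgen y)⁻¹) *
            (FreeGroup.lift fgen x)⁻¹ := by group
      rw [key]
      exact ihx _ (ihy c hc)

lemma hrels2 : ∀ r ∈ braidRels 3,
    (FreeGroup.lift fun _ : Fin 3 => Multiplicative.ofAdd (1 : ℤ)) r = 1 := by
  intro r hr
  rcases hr with ⟨i, j, hij, rfl⟩ | ⟨i, j, hij, rfl⟩ <;>
    simp only [map_mul, map_inv, FreeGroup.lift_apply_of] <;> group

def ε : Braid 3 →* Multiplicative ℤ := PresentedGroup.toGroup hrels2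

lemma εσ (i : Fin 3) : ε (σ i) = Multiplicative.ofAdd (1 : ℤ) := PresentedGroup.toGroup.of hrels2

lemma ε_prod (l : List (Braid 3)) :
    ε ((l.map fun w => w * σ 0 * w⁻¹).prod) = Multiplicative.ofAdd (l.length : ℤ) := by
  induction l with
  | nil => simp
  | cons w t ih =>
      simp only [List.map_cons, List.prod_cons, map_mul, map_inv, ih, εσ, List.length_cons]
      have hw : ε w = Multiplicative.ofAdd (Multiplicative.toAdd (ε w)) := rfl
      rw [hw]
      simp only [← ofAdd_neg, ← ofAdd_add]
      congr 1
      push_cast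
      ring

end B9Aux

open B9Aux in
theorem b9_not_quasipositive :
    ¬ Quasipositive
      ((σ₃ ^ 3)⁻¹ * (σ₁ ^ 3)⁻¹ * σ₂⁻¹ * σ₃ * (σ₂ ^ 2)⁻¹ * (σ₁ ^ 2)⁻¹ * σ₂⁻¹ * σ₃⁻¹ *
        σ₂ * (σ₁ ^ 2)⁻¹ * σ₂⁻¹ * σ₃ ^ 2 * σ₂ * σ₁ * Δ₄ ^ 2) := by
  rintro ⟨l, hl⟩
  have hεB : ε ((σ₃ ^ 3)⁻¹ * (σ₁ ^ 3)⁻¹ * σ₂⁻¹ * σ₃ * (σ₂ ^ 2)⁻¹ * (σ₁ ^ 2)⁻¹ * σ₂⁻¹ * σ₃⁻¹ *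
        σ₂ * (σ₁ ^ 2)⁻¹ * σ₂⁻¹ * σ₃ ^ 2 * σ₂ * σ₁ * Δ₄ ^ 2) = Multiplicative.ofAdd (2 : ℤ) := by
    simp only [σ₁, σ₂, σ₃, Δ₄, map_mul, map_inv, map_pow, εσ]
    decide
  have hlen : l.length = 2 := by
    have h := hεB
    rw [hl, ε_prod] at h
    have h2 : (l.length : ℤ) = 2 := by
      have := Multiplicative.ofAdd.injective h
      omega
    exact_mod_cast h2
  obtain ⟨w1, w2, rfl⟩ : ∃ w1 w2, l = [w1, w2] := by
    match l, hlen with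
    | [w1, w2], _ => exact ⟨w1, w2, rfl⟩
  have hφB : φ ((σ₃ ^ 3)⁻¹ * (σ₁ ^ 3)⁻¹ * σ₂⁻¹ * σ₃ * (σ₂ ^ 2)⁻¹ * (σ₁ ^ 2)⁻¹ * σ₂⁻¹ * σ₃⁻¹ *
        σ₂ * (σ₁ ^ 2)⁻¹ * σ₂⁻¹ * σ₃ ^ 2 * σ₂ * σ₁ * Δ₄ ^ 2) = P15 := by
    simp only [σ₁, σ₂, σ₃, Δ₄, map_mul, map_inv, map_pow, φσ, fgen0, fgen1, fgen2]
    rw [show ((S3u ^ 3)⁻¹ : Equiv.Perm (Fin 31)) = P1 from by decide]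
    rw [show P1 * (S1u ^ 3)⁻¹ = P2 from by decide]
    rw [show P2 * S2u⁻¹ = P3 from by decide]
    rw [show P3 * S3u = P4 from by decide]
    rw [show P4 * (S2u ^ 2)⁻¹ = P5 from by decide]
    rw [show P5 * (S1u ^ 2)⁻¹ = P6 from by decide]
    rw [show P6 * S2u⁻¹ = P7 from by decide]
    rw [show P7 * S3u⁻¹ = P8 from by decide]
    rw [show P8 * S2u = P9 from by decide]
    rw [show P9 * (S1u ^ 2)⁻¹ = P10 from by decide]
    rw [show P10 * S2u⁻¹ = P11 from by decide]
    rw [show P11 * S3u ^ 2 = P12 from by decide]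
    rw [show P12 * S2u = P13 from by decide]
    rw [show P13 * S1u = P14 from by decide]
    rw [show P14 * (S1u * S2u * S3u * S1u * S2u * S1u) ^ 2 = P15 from by decide]
  have hφl := congrArg φ hl
  rw [hφB] at hφl
  simp only [List.map_cons, List.map_nil, List.prod_cons, List.prod_nil, mul_one,
    map_mul, map_inv, φσ, fgen0] at hφl
  have hS1mem : S1u ∈ Cm := by decide
  have hm1 : φ w1 * S1u * (φ w1)⁻¹ ∈ Cm := conj_mem w1 S1u hS1mem
  have hm2 : φ w2 * S1u * (φ w2)⁻¹ ∈ Cm := conj_mem w2 S1u hS1mem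
  have hfinb : (Cm.all fun m1 => Cm.all fun m2 => decide (P15 ≠ m1 * m2)) = true := by decide
  have hfin : ∀ m1 ∈ Cm, ∀ m2 ∈ Cm, P15 ≠ m1 * m2 := fun m1 h1 m2 h2 =>
    of_decide_eq_true (List.all_eq_true.mp (List.all_eq_true.mp hfinb m1 h1) m2 h2)
  exact hfin _ hm1 _ hm2 (by rw [hφl])
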